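/- arXiv:2208.06037 — 3 statements merged into one kernel-verified Lean document; each statement's English description precedes it below -/
import Mathlib

section
/- Let X be a real random variable on a probability space with E[X] = 0. Let K > 0 be such that the random variable exp(|X|/K) is integrable and E[exp(|X|/K)] ≤ 2. Then for every real h with |h|·K ≤ 1, E[exp(hX)] ≤ 1 + h²K² ≤ exp(h²K²). -/
open MeasureTheory ProbabilityTheory

private lemma lemA (t : ℝ) : Real.exp t - 1 - t ≤ Real.exp |t| - 1 - |t| := by
  rcases le_or_gt 0 t with ht | ht
  · rw [abs_of_nonneg ht]
  · rw [abs_of_neg ht]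
    have hs : 0 ≤ -t := by linarith
    have h1 : -t ≤ Real.sinh (-t) := Real.self_le_sinh_iff.2 hs
    rw [Real.sinh_eq] at h1
    simp only [neg_neg] at h1
    linarith

private lemma hasDerivAt_f (l : ℝ) (u : ℝ) :
    HasDerivAt (fun u => l ^ 2 * (Real.exp u - 1 - u) - (Real.exp (l * u) - 1 - l * u))
      (l ^ 2 * (Real.exp u - 1) - l * (Real.exp (l * u) - 1)) u := by
  have h1 : HasDerivAt (fun u : ℝ => Real.exp u - 1 - u) (Real.exp u - 1) u := by
    exact ((Real.hasDerivAt_exp u).sub_const 1).sub (hasDerivAt_id u)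
  have hlin : HasDerivAt (fun u : ℝ => l * u) l u := by
    simpa using (hasDerivAt_id u).const_mul l
  have h2 : HasDerivAt (fun u : ℝ => Real.exp (l * u) - 1 - l * u)
      (Real.exp (l * u) * l - l) u :=
    ((Real.hasDerivAt_exp (l * u)).comp u hlin |>.sub_const 1).sub hlin
  have := (h1.const_mul (l ^ 2)).sub h2
  refine this.congr_deriv ?_
  ring

private lemma lemB {l u : ℝ} (hl0 : 0 ≤ l) (hl1 : l ≤ 1) (hu : 0 ≤ u) :
    Real.exp (l * u) - 1 - l * u ≤ l ^ 2 * (Real.exp u - 1 - u) := by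
  set f : ℝ → ℝ := fun u => l ^ 2 * (Real.exp u - 1 - u) - (Real.exp (l * u) - 1 - l * u)
    with hf
  have hdiff : Differentiable ℝ f := fun x => (hasDerivAt_f l x).differentiableAt
  have hderiv : ∀ x : ℝ, 0 ≤ x → 0 ≤ deriv f x := by
    intro x hx
    rw [hf, (hasDerivAt_f l x).deriv]
    have hb : (0:ℝ) ≤ 1 - l := by linarith
    have hab : l + (1 - l) = 1 := by ring
    have hconv := convexOn_exp.2 (Set.mem_univ x) (Set.mem_univ (0:ℝ)) hl0 hb hab
    simp only [smul_eq_mul, mul_zero, add_zero, Real.exp_zero, mul_one] at hconv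
    nlinarith [Real.exp_pos x, Real.add_one_le_exp x]
  have hmono : MonotoneOn f (Set.Ici (0:ℝ)) := by
    apply monotoneOn_of_deriv_nonneg (convex_Ici 0) hdiff.continuous.continuousOn
      hdiff.differentiableOn
    intro x hx
    exact hderiv x (le_of_lt (by simpa using hx))
  have h0 : f 0 ≤ f u := hmono Set.self_mem_Ici (Set.mem_Ici.2 hu) hu
  have hf0 : f 0 = 0 := by simp [hf]
  rw [hf0] at h0
  simp only [hf] at h0
  linarith

/-- If `E X = 0` and `K > 0` is admissible for the `ψ₁` Orlicz norm of `X`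
(i.e. `E[exp(|X|/K)] ≤ 2`), then for every real `h` with `|h| K ≤ 1`,
`E[exp(hX)] ≤ 1 + h² K² ≤ exp(h² K²)`. -/
theorem mgf_le_of_psi1_norm_le {Ω : Type*} [MeasureSpace Ω]
    [IsProbabilityMeasure (ℙ : Measure Ω)] (X : Ω → ℝ)
    (hXint : Integrable X) (hmean : ∫ ω, X ω = 0)
    (K : ℝ) (hK : 0 < K)
    (hint : Integrable (fun ω => Real.exp (|X ω| / K)))
    (horlicz : ∫ ω, Real.exp (|X ω| / K) ≤ 2)
    (h : ℝ) (hh : |h| * K ≤ 1) :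
    (∫ ω, Real.exp (h * X ω)) ≤ 1 + h ^ 2 * K ^ 2 ∧
      1 + h ^ 2 * K ^ 2 ≤ Real.exp (h ^ 2 * K ^ 2) := by
  refine ⟨?_, by linarith [Real.add_one_le_exp (h ^ 2 * K ^ 2)]⟩
  -- pointwise bound
  have hpt : ∀ x : ℝ, Real.exp (h * x) ≤
      1 + h * x + h ^ 2 * K ^ 2 * (Real.exp (|x| / K) - 1 - |x| / K) := by
    intro x
    have hA := lemA (h * x)
    have hB := lemB (l := |h| * K) (u := |x| / K) (by positivity) hh (by positivity)
    have hlu : |h| * K * (|x| / K) = |h * x| := by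
      rw [abs_mul]; field_simp
    rw [hlu] at hB
    have hsq : (|h| * K) ^ 2 = h ^ 2 * K ^ 2 := by
      rw [mul_pow, sq_abs]
    rw [hsq] at hB
    linarith
  -- integrability facts
  have hXm := hXint.aestronglyMeasurable
  have hmeas : AEStronglyMeasurable (fun ω => Real.exp (h * X ω)) ℙ :=
    (Real.continuous_exp.comp (continuous_const.mul continuous_id)).comp_aestronglyMeasurable hXm
  have hintExp : Integrable (fun ω => Real.exp (h * X ω)) := by
    refine hint.mono hmeas (Filter.Eventually.of_forall fun ω => ?_)
    rw [Real.norm_eq_abs, Real.norm_eq_abs, abs_of_pos (Real.exp_pos _),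
      abs_of_pos (Real.exp_pos _)]
    apply Real.exp_le_exp.2
    calc h * X ω ≤ |h * X ω| := le_abs_self _
      _ = |h| * K * (|X ω| / K) := by rw [abs_mul]; field_simp
      _ ≤ 1 * (|X ω| / K) := mul_le_mul_of_nonneg_right hh (by positivity)
      _ = |X ω| / K := one_mul _
  have hIA : Integrable (fun ω => |X ω| / K) := hXint.abs.div_const K
  have hIhX : Integrable (fun ω => h * X ω) := hXint.const_mul h
  have hI1 : Integrable (fun ω => 1 + h * X ω) := (integrable_const 1).add hIhX
  have hI4 : Integrable (fun ω => Real.exp (|X ω| / K) - 1) := hint.sub (integrable_const 1)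
  have hI5 : Integrable (fun ω => Real.exp (|X ω| / K) - 1 - |X ω| / K) := hI4.sub hIA
  have hI3 : Integrable (fun ω =>
      h ^ 2 * K ^ 2 * (Real.exp (|X ω| / K) - 1 - |X ω| / K)) := hI5.const_mul _
  have hintegral := integral_mono hintExp (hI1.add hI3) (fun ω => hpt (X ω))
  have hval : (∫ ω, (1 + h * X ω + h ^ 2 * K ^ 2 * (Real.exp (|X ω| / K) - 1 - |X ω| / K)))
      = 1 + h ^ 2 * K ^ 2 * ((∫ ω, Real.exp (|X ω| / K)) - 1 - ∫ ω, |X ω| / K) := by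
    rw [integral_add hI1 hI3, integral_add (integrable_const 1) hIhX,
      integral_const_mul, integral_const_mul, integral_sub hI4 hIA,
      integral_sub hint (integrable_const 1), integral_const, hmean]
    simp
  simp only [Pi.add_apply] at hintegral
  rw [hval] at hintegral
  have hEabs : 0 ≤ ∫ ω, |X ω| / K := integral_nonneg fun ω => by positivity
  have hfac : (∫ ω, Real.exp (|X ω| / K)) - 1 - ∫ ω, |X ω| / K ≤ 1 := by linarith
  have hmul : h ^ 2 * K ^ 2 * ((∫ ω, Real.exp (|X ω| / K)) - 1 - ∫ ω, |X ω| / K)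
      ≤ h ^ 2 * K ^ 2 * 1 := mul_le_mul_of_nonneg_left hfac (by positivity)
  linarith
end

section
/- Let X₁, …, Xₙ be independent real random variables on a probability space with E[Xᵢ] = 0 for each i, and let K₁, …, Kₙ > 0 be such that for each i, exp(|Xᵢ|/Kᵢ) is integrable and E[exp(|Xᵢ|/Kᵢ) − 1 − |Xᵢ|/Kᵢ] ≤ 1. Set Sₙ = X₁ + ⋯ + Xₙ, B² = K₁² + ⋯ + Kₙ², and M = max(K₁, …, Kₙ). Then for every real x ≥ 0, P(Sₙ ≥ x) ≤ exp(−min(x²/(4B²), x/(2M))). -/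
open MeasureTheory ProbabilityTheory Finset

private lemma psi_neg_le (a : ℝ) (ha : 0 ≤ a) :
    Real.exp (-a) - 1 + a ≤ Real.exp a - 1 - a := by
  have hmono : MonotoneOn (fun a : ℝ => Real.exp a - Real.exp (-a) - 2 * a) (Set.Ici 0) := by
    have hder : ∀ u : ℝ, HasDerivAt (fun a : ℝ => Real.exp a - Real.exp (-a) - 2 * a)
        (Real.exp u - (-1) * Real.exp (-u) - 2) u := by
      intro u
      have h1 := Real.hasDerivAt_exp u
      have h2 : HasDerivAt (fun a : ℝ => Real.exp (-a)) ((-1) * Real.exp (-u)) u := by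
        exact ((Real.hasDerivAt_exp (-u)).comp u (hasDerivAt_neg u)).congr_deriv (by ring)
      exact ((h1.sub h2).sub ((hasDerivAt_id u).const_mul 2)).congr_deriv (by ring)
    apply monotoneOn_of_deriv_nonneg (convex_Ici 0)
    · exact (Continuous.continuousOn (by continuity))
    · intro u _
      exact (hder u).differentiableAt.differentiableWithinAt
    · intro u hu
      rw [(hder u).deriv]
      have h3 : Real.exp u * Real.exp (-u) = 1 := by rw [← Real.exp_add]; simp
      have h4 : (1:ℝ) ≤ Real.exp u :=
        Real.one_le_exp (by simpa using interior_subset hu : (0:ℝ) ≤ u)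
      nlinarith [Real.exp_pos (-u), Real.exp_pos u]
  have := hmono (Set.self_mem_Ici) (Set.mem_Ici.2 ha) ha
  simp only at this
  simp only [neg_zero, Real.exp_zero] at this
  linarith

private lemma psi_scale (t u : ℝ) (ht0 : 0 ≤ t) (ht1 : t ≤ 1) (hu : 0 ≤ u) :
    Real.exp (t * u) - 1 - t * u ≤ t ^ 2 * (Real.exp u - 1 - u) := by
  have hconv : ∀ v : ℝ, 0 ≤ v → Real.exp (t * v) ≤ 1 - t + t * Real.exp v := by
    intro v hv
    have := convexOn_exp.2 (Set.mem_univ v) (Set.mem_univ (0:ℝ)) ht0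
      (by linarith : (0:ℝ) ≤ 1 - t) (by ring)
    simp only [smul_eq_mul, mul_zero, add_zero, Real.exp_zero, mul_one] at this
    linarith
  have hmono : MonotoneOn
      (fun u : ℝ => t ^ 2 * (Real.exp u - 1 - u) - (Real.exp (t * u) - 1 - t * u)) (Set.Ici 0) := by
    have hder : ∀ v : ℝ, HasDerivAt
        (fun u : ℝ => t ^ 2 * (Real.exp u - 1 - u) - (Real.exp (t * u) - 1 - t * u))
        (t ^ 2 * (Real.exp v - 1) - (t * Real.exp (t * v) - t)) v := by
      intro v
      have h1 : HasDerivAt (fun u : ℝ => Real.exp u - 1 - u) (Real.exp v - 1) v := by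
        exact (((Real.hasDerivAt_exp v).sub_const 1).sub (hasDerivAt_id v)).congr_deriv (by ring)
      have h2 : HasDerivAt (fun u : ℝ => Real.exp (t * u)) (t * Real.exp (t * v)) v := by
        exact ((Real.hasDerivAt_exp (t * v)).comp v ((hasDerivAt_id v).const_mul t)).congr_deriv (by ring)
      have h3 : HasDerivAt (fun u : ℝ => Real.exp (t * u) - 1 - t * u)
          (t * Real.exp (t * v) - t) v := by
        exact ((h2.sub_const 1).sub ((hasDerivAt_id v).const_mul t)).congr_deriv (by ring)
      exact (h1.const_mul (t ^ 2)).sub h3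
    apply monotoneOn_of_deriv_nonneg (convex_Ici 0)
    · exact (Continuous.continuousOn (by continuity))
    · intro v _
      exact (hder v).differentiableAt.differentiableWithinAt
    · intro v hv
      rw [(hder v).deriv]
      have hv0 : (0:ℝ) ≤ v := le_of_lt (by simpa using hv)
      have := hconv v hv0
      nlinarith [Real.exp_pos v, Real.exp_pos (t * v)]
  have := hmono (Set.self_mem_Ici) (Set.mem_Ici.2 hu) hu
  simp only [mul_zero, Real.exp_zero] at this
  linarith

private lemma exp_pointwise (lam Ki y : ℝ) (hlam : 0 ≤ lam) (hK : 0 < Ki) (hlamK : lam * Ki ≤ 1) :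
    Real.exp (lam * y) ≤ 1 + lam * y + (lam * Ki) ^ 2 * (Real.exp (|y| / Ki) - 1 - |y| / Ki) := by
  have h1 : Real.exp (lam * y) - 1 - lam * y ≤ Real.exp (lam * |y|) - 1 - lam * |y| := by
    rcases le_or_gt 0 y with hy | hy
    · rw [abs_of_nonneg hy]
    · rw [abs_of_neg hy]
      have := psi_neg_le (lam * (-y)) (mul_nonneg hlam (by linarith))
      have he : lam * y = -(lam * (-y)) := by ring
      rw [he]
      linarith
  have h2 : lam * |y| = (lam * Ki) * (|y| / Ki) := by field_simp
  have h3 := psi_scale (lam * Ki) (|y| / Ki) (mul_nonneg hlam hK.le) hlamK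
    (div_nonneg (abs_nonneg y) hK.le)
  rw [h2] at h1
  linarith

private lemma iIndepFun_congr_ae {Ω ι : Type*} [MeasurableSpace Ω] {μ : Measure Ω}
    {f g : ι → Ω → ℝ} (hindep : iIndepFun f μ)
    (h : ∀ i, f i =ᵐ[μ] g i) : iIndepFun g μ := by
  rw [iIndepFun_iff_measure_inter_preimage_eq_mul] at hindep ⊢
  intro S sets hsets
  have hpre : ∀ i, (f i ⁻¹' sets i : Set Ω) =ᵐ[μ] (g i ⁻¹' sets i) := by
    intro i
    filter_upwards [h i] with ω hω
    show (f i ω ∈ sets i) = (g i ω ∈ sets i)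
    rw [hω]
  have h1 : μ (⋂ i ∈ S, g i ⁻¹' sets i) = μ (⋂ i ∈ S, f i ⁻¹' sets i) := by
    apply measure_congr
    exact (S.finite_toSet.eventuallyEq_iInter (fun i _ => hpre i)).symm
  rw [h1, hindep S hsets]
  exact Finset.prod_congr rfl fun i _ => measure_congr (hpre i)

private lemma main_bound {Ω : Type*} [MeasureSpace Ω] [IsProbabilityMeasure (ℙ : Measure Ω)]
    {ι : Type*} [Fintype ι] [Nonempty ι]
    (X : ι → Ω → ℝ) (K : ι → ℝ) (hmeas : ∀ i, Measurable (X i))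
    (hindep : iIndepFun X ℙ)
    (hXint : ∀ i, Integrable (X i)) (hmean : ∀ i, ∫ ω, X i ω = 0)
    (hK : ∀ i, 0 < K i)
    (hint : ∀ i, Integrable (fun ω => Real.exp (|X i ω| / K i)))
    (horlicz : ∀ i, ∫ ω, (Real.exp (|X i ω| / K i) - 1 - |X i ω| / K i) ≤ 1)
    (lam : ℝ) (hlam0 : 0 ≤ lam) (hlamK : ∀ i, lam * K i ≤ 1) (x : ℝ) :
    (ℙ {ω | x ≤ ∑ i, X i ω}).toReal ≤ Real.exp (lam ^ 2 * (∑ i, K i ^ 2) - lam * x) := by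
  have ipsi : ∀ i, Integrable (fun ω => Real.exp (|X i ω| / K i) - 1 - |X i ω| / K i) :=
    fun i => ((hint i).sub (integrable_const 1)).sub ((hXint i).abs.div_const (K i))
  have iexp : ∀ i, Integrable (fun ω => Real.exp (lam * X i ω)) := by
    intro i
    refine (hint i).mono' ((hmeas i).const_mul lam).exp.aestronglyMeasurable ?_
    filter_upwards with ω
    rw [Real.norm_eq_abs, abs_of_pos (Real.exp_pos _), Real.exp_le_exp]
    rw [le_div_iff₀ (hK i)]
    have h1 : X i ω ≤ |X i ω| := le_abs_self _
    have h2 := abs_nonneg (X i ω)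
    nlinarith [mul_le_mul_of_nonneg_right (hlamK i) h2,
      mul_le_mul_of_nonneg_left h1 (mul_nonneg hlam0 (hK i).le)]
  have hmgf : ∀ i, mgf (X i) ℙ lam ≤ Real.exp (lam ^ 2 * K i ^ 2) := by
    intro i
    have hrhs : Integrable (fun ω => 1 + lam * X i ω +
        (lam * K i) ^ 2 * (Real.exp (|X i ω| / K i) - 1 - |X i ω| / K i)) :=
      ((integrable_const 1).add ((hXint i).const_mul lam)).add ((ipsi i).const_mul _)
    have hIle : mgf (X i) ℙ lam ≤ ∫ ω, (1 + lam * X i ω +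
        (lam * K i) ^ 2 * (Real.exp (|X i ω| / K i) - 1 - |X i ω| / K i)) := by
      refine integral_mono (iexp i) hrhs ?_
      intro ω
      exact exp_pointwise lam (K i) (X i ω) hlam0 (hK i) (hlamK i)
    have hIeq : ∫ ω, (1 + lam * X i ω +
        (lam * K i) ^ 2 * (Real.exp (|X i ω| / K i) - 1 - |X i ω| / K i))
        = 1 + lam * (∫ ω, X i ω) +
          (lam * K i) ^ 2 * ∫ ω, (Real.exp (|X i ω| / K i) - 1 - |X i ω| / K i) := by
      have int1 : Integrable (fun ω => 1 + lam * X i ω) (ℙ : Measure Ω) :=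
        (integrable_const 1).add ((hXint i).const_mul lam)
      rw [integral_add int1 ((ipsi i).const_mul _),
        integral_add (integrable_const (1:ℝ)) ((hXint i).const_mul lam),
        integral_const, integral_const_mul, integral_const_mul]
      simp
    have hpsil := horlicz i
    have hsq : (0:ℝ) ≤ (lam * K i) ^ 2 := sq_nonneg _
    have h2 : mgf (X i) ℙ lam ≤ 1 + (lam * K i) ^ 2 := by
      rw [hIeq, hmean i] at hIle
      nlinarith
    calc mgf (X i) ℙ lam ≤ 1 + (lam * K i) ^ 2 := h2
      _ ≤ Real.exp ((lam * K i) ^ 2) := by linarith [Real.add_one_le_exp ((lam * K i) ^ 2)]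
      _ = Real.exp (lam ^ 2 * K i ^ 2) := by ring_nf
  have hS : Integrable (fun ω => Real.exp (lam * (∑ i, X i) ω)) :=
    hindep.integrable_exp_mul_sum hmeas (fun i _ => iexp i)
  have hch := measure_ge_le_exp_mul_mgf (μ := (ℙ : Measure Ω)) (X := ∑ i, X i) x hlam0 hS
  have hset : {ω | x ≤ (∑ i, X i) ω} = {ω | x ≤ ∑ i, X i ω} := by
    simp [Finset.sum_apply]
  rw [hset] at hch
  have hprod : mgf (∑ i, X i) ℙ lam ≤ Real.exp (lam ^ 2 * ∑ i, K i ^ 2) := by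
    rw [hindep.mgf_sum hmeas]
    calc ∏ i, mgf (X i) ℙ lam ≤ ∏ i, Real.exp (lam ^ 2 * K i ^ 2) :=
          Finset.prod_le_prod (fun i _ => mgf_nonneg) (fun i _ => hmgf i)
      _ = Real.exp (∑ i, lam ^ 2 * K i ^ 2) := (Real.exp_sum _ _).symm
      _ = Real.exp (lam ^ 2 * ∑ i, K i ^ 2) := by rw [Finset.mul_sum]
  calc (ℙ {ω | x ≤ ∑ i, X i ω}).toReal ≤ Real.exp (-lam * x) * mgf (∑ i, X i) ℙ lam := hch
    _ ≤ Real.exp (-lam * x) * Real.exp (lam ^ 2 * ∑ i, K i ^ 2) :=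
        mul_le_mul_of_nonneg_left hprod (Real.exp_pos _).le
    _ = Real.exp (lam ^ 2 * (∑ i, K i ^ 2) - lam * x) := by rw [← Real.exp_add]; ring_nf

/-- Theorem 2, combined form: for independent mean-zero `Xᵢ` with admissible `ψ₁₁`-Orlicz
constants `Kᵢ`, with `B² = ∑ Kᵢ²` and `M = max Kᵢ`, one has
`P(Sₙ ≥ x) ≤ exp(−min(x²/(4B²), x/(2M)))` for all `x ≥ 0`. -/
theorem tail_le_min_form {Ω : Type*} [MeasureSpace Ω]
    [IsProbabilityMeasure (ℙ : Measure Ω)]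
    {ι : Type*} [Fintype ι] [Nonempty ι]
    (X : ι → Ω → ℝ) (K : ι → ℝ)
    (hindep : iIndepFun X ℙ)
    (hXint : ∀ i, Integrable (X i)) (hmean : ∀ i, ∫ ω, X i ω = 0)
    (hK : ∀ i, 0 < K i)
    (hint : ∀ i, Integrable (fun ω => Real.exp (|X i ω| / K i)))
    (horlicz : ∀ i, ∫ ω, (Real.exp (|X i ω| / K i) - 1 - |X i ω| / K i) ≤ 1)
    (B M : ℝ) (hB : B ^ 2 = ∑ i, K i ^ 2)
    (hM : M = Finset.univ.sup' Finset.univ_nonempty K)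
    (x : ℝ) (hx0 : 0 ≤ x) :
    (ℙ {ω | x ≤ ∑ i, X i ω}).toReal ≤
      Real.exp (-(min (x ^ 2 / (4 * B ^ 2)) (x / (2 * M)))) := by
  classical
  have hB2 : 0 < B ^ 2 := by
    rw [hB]
    exact Finset.sum_pos (fun i _ => pow_pos (hK i) 2) Finset.univ_nonempty
  have hKM : ∀ i, K i ≤ M := fun i => hM ▸ Finset.le_sup' K (Finset.mem_univ i)
  have hM0 : 0 < M := lt_of_lt_of_le (hK (Classical.arbitrary ι)) (hKM _)
  -- measurable modifications
  set Y : ι → Ω → ℝ := fun i => (hXint i).1.mk (X i) with hYdef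
  have hae : ∀ i, X i =ᵐ[ℙ] Y i := fun i => (hXint i).1.ae_eq_mk
  have hmeasY : ∀ i, Measurable (Y i) := fun i => (hXint i).1.stronglyMeasurable_mk.measurable
  have hindepY := iIndepFun_congr_ae hindep hae
  have hXintY : ∀ i, Integrable (Y i) := fun i => (hXint i).congr (hae i)
  have hmeanY : ∀ i, ∫ ω, Y i ω = 0 := fun i => by
    rw [← integral_congr_ae (hae i)]; exact hmean i
  have haeexp : ∀ i, (fun ω => Real.exp (|X i ω| / K i))
      =ᵐ[(ℙ : Measure Ω)] fun ω => Real.exp (|Y i ω| / K i) :=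
    fun i => (hae i).mono fun ω h => by simp only [h]
  have haepsi : ∀ i, (fun ω => Real.exp (|X i ω| / K i) - 1 - |X i ω| / K i)
      =ᵐ[(ℙ : Measure Ω)] fun ω => Real.exp (|Y i ω| / K i) - 1 - |Y i ω| / K i :=
    fun i => (hae i).mono fun ω h => by simp only [h]
  have hintY : ∀ i, Integrable (fun ω => Real.exp (|Y i ω| / K i)) :=
    fun i => (hint i).congr (haeexp i)
  have horliczY : ∀ i, ∫ ω, (Real.exp (|Y i ω| / K i) - 1 - |Y i ω| / K i) ≤ 1 := fun i => by
    rw [← integral_congr_ae (haepsi i)]; exact horlicz i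
  have hmeq : ℙ {ω | x ≤ ∑ i, X i ω} = ℙ {ω | x ≤ ∑ i, Y i ω} := by
    apply measure_congr
    have hsum : ∀ᵐ ω ∂(ℙ : Measure Ω), ∀ i, X i ω = Y i ω := ae_all_iff.2 hae
    filter_upwards [hsum] with ω h
    show (x ≤ ∑ i, X i ω) = (x ≤ ∑ i, Y i ω)
    rw [Finset.sum_congr rfl fun i _ => h i]
  -- choose lambda
  set lam := min (x / (2 * B ^ 2)) (1 / M) with hlamdef
  have hlam0 : 0 ≤ lam := le_min (div_nonneg hx0 (by positivity)) (by positivity)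
  have hlamK : ∀ i, lam * K i ≤ 1 := by
    intro i
    have h1 : lam ≤ 1 / M := min_le_right _ _
    calc lam * K i ≤ (1 / M) * M :=
          mul_le_mul h1 (hKM i) (hK i).le (by positivity)
      _ = 1 := by field_simp
  have hmain := main_bound Y K hmeasY hindepY hXintY hmeanY hK hintY horliczY lam hlam0 hlamK x
  rw [hmeq]
  refine hmain.trans ?_
  rw [Real.exp_le_exp, ← hB]
  rcases le_total (x / (2 * B ^ 2)) (1 / M) with hc | hc
  · have hlam : lam = x / (2 * B ^ 2) := min_eq_left hc
    have hminle : min (x ^ 2 / (4 * B ^ 2)) (x / (2 * M)) ≤ x ^ 2 / (4 * B ^ 2) :=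
      min_le_left _ _
    rw [hlam]
    have heq : (x / (2 * B ^ 2)) ^ 2 * B ^ 2 - (x / (2 * B ^ 2)) * x
        = -(x ^ 2 / (4 * B ^ 2)) := by field_simp; ring
    rw [heq]
    linarith
  · have hlam : lam = 1 / M := min_eq_right hc
    have hminle : min (x ^ 2 / (4 * B ^ 2)) (x / (2 * M)) ≤ x / (2 * M) := min_le_right _ _
    rw [hlam]
    have hx2 : 2 * B ^ 2 ≤ x * M := by
      rw [div_le_div_iff₀ hM0 (by positivity)] at hc
      linarith
    have heq : (1 / M) ^ 2 * B ^ 2 - (1 / M) * x + x / (2 * M)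
        = (2 * B ^ 2 - x * M) / (2 * M ^ 2) := by field_simp; ring
    have hle : (2 * B ^ 2 - x * M) / (2 * M ^ 2) ≤ 0 :=
      div_nonpos_of_nonpos_of_nonneg (by linarith) (by positivity)
    linarith [heq ▸ hle]
end

section
/- Let X₁, X₂, … be independent identically distributed real random variables with E[X₁] = 0, not almost surely zero, and such that exp(|X₁|/K₀) is integrable for some K₀ > 0. Set Sₙ = X₁ + ⋯ + Xₙ and σ² = E[X₁²]. Then for every δ > 0 there exists η > 0 such that for all positive integers n and all real x with 0 ≤ x ≤ η·n, P(Sₙ ≥ x) ≤ exp(−x²/((2 + δ)·n·σ²)). -/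
open MeasureTheory ProbabilityTheory Finset

section AuxLemmas


lemma exp_quad_neg {u : ℝ} (hu : u ≤ 0) : Real.exp u ≤ 1 + u + u ^ 2 / 2 := by
  have key : AntitoneOn (fun u : ℝ => 1 + u + u ^ 2 / 2 - Real.exp u) (Set.Iic 0) := by
    apply antitoneOn_of_deriv_nonpos (convex_Iic 0)
    · fun_prop
    · fun_prop
    · intro x hx
      have hd : HasDerivAt (fun u : ℝ => 1 + u + u ^ 2 / 2 - Real.exp u)
          (1 + x - Real.exp x) x := by
        have h1 := (((hasDerivAt_const x (1:ℝ)).add (hasDerivAt_id x)).add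
          ((hasDerivAt_pow 2 x).div_const 2)).sub (Real.hasDerivAt_exp x)
        refine h1.congr_deriv ?_
        norm_num
      rw [hd.deriv]
      have := Real.add_one_le_exp x
      linarith
  have h0 : (0:ℝ) ∈ Set.Iic (0:ℝ) := Set.mem_Iic.2 le_rfl
  have := key (Set.mem_Iic.2 hu) h0 hu
  simp only [Real.exp_zero] at this
  linarith

lemma exp_quad_pos {u : ℝ} (hu : 0 ≤ u) :
    Real.exp u ≤ 1 + u + u ^ 2 / 2 * Real.exp u := by
  have key : MonotoneOn (fun u : ℝ => 1 + u + u ^ 2 / 2 * Real.exp u - Real.exp u)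
      (Set.Ici 0) := by
    apply monotoneOn_of_deriv_nonneg (convex_Ici 0)
    · fun_prop
    · fun_prop
    · intro x hx
      have hx0 : (0:ℝ) ≤ x := le_of_lt (by simpa using hx)
      have hd : HasDerivAt (fun u : ℝ => 1 + u + u ^ 2 / 2 * Real.exp u - Real.exp u)
          (1 + (x * Real.exp x + x ^ 2 / 2 * Real.exp x) - Real.exp x) x := by
        have h2 : HasDerivAt (fun u : ℝ => u ^ 2 / 2 * Real.exp u)
            (x * Real.exp x + x ^ 2 / 2 * Real.exp x) x := by
          have := ((hasDerivAt_pow 2 x).div_const 2).mul (Real.hasDerivAt_exp x)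
          refine this.congr_deriv ?_
          norm_num
        have h1 := (((hasDerivAt_const x (1:ℝ)).add (hasDerivAt_id x)).add h2).sub
          (Real.hasDerivAt_exp x)
        refine h1.congr_deriv ?_
        ring
      rw [hd.deriv]
      -- 1 - e^x + x e^x ≥ 0 since e^{-x} ≥ 1 - x
      have h3 : 1 - x ≤ Real.exp (-x) := by
        have := Real.add_one_le_exp (-x); linarith
      have h4 : Real.exp (-x) * Real.exp x = 1 := by
        rw [← Real.exp_add]; simp
      nlinarith [Real.exp_pos x, sq_nonneg x]
  have h0 : (0:ℝ) ∈ Set.Ici (0:ℝ) := Set.mem_Ici.2 le_rfl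
  have := key h0 (Set.mem_Ici.2 hu) hu
  simp only [Real.exp_zero] at this
  linarith

lemma exp_quadratic (u : ℝ) : Real.exp u ≤ 1 + u + u ^ 2 / 2 * Real.exp |u| := by
  rcases le_or_gt u 0 with h | h
  · have h1 := exp_quad_neg h
    have h2 : (1:ℝ) ≤ Real.exp |u| := Real.one_le_exp (abs_nonneg u)
    nlinarith [sq_nonneg u]
  · rw [abs_of_pos h]
    exact exp_quad_pos h.le

lemma sq_le_four_mul_exp {v : ℝ} (hv : 0 ≤ v) : v ^ 2 ≤ 4 * Real.exp v := by
  have h1 : 1 + v / 2 ≤ Real.exp (v / 2) := by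
    have := Real.add_one_le_exp (v / 2); linarith
  have h2 : Real.exp (v / 2) * Real.exp (v / 2) = Real.exp v := by
    rw [← Real.exp_add]; ring_nf
  nlinarith [Real.exp_pos (v/2)]


lemma iIndepFun_of_ae_eq {Ω : Type*} [MeasurableSpace Ω] {μ : Measure Ω}
    {X Y : ℕ → Ω → ℝ} (h : iIndepFun X μ)
    (hXY : ∀ i, X i =ᵐ[μ] Y i) : iIndepFun Y μ := by
  rw [iIndepFun_iff_measure_inter_preimage_eq_mul] at h ⊢
  intro S sets hsets
  have hpre : ∀ i : ℕ, X i ⁻¹' sets i =ᵐ[μ] Y i ⁻¹' sets i := by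
    intro i
    filter_upwards [hXY i] with ω hω
    show (X i ω ∈ sets i) = (Y i ω ∈ sets i)
    rw [hω]
  have hint : (⋂ i ∈ S, X i ⁻¹' sets i) =ᵐ[μ] (⋂ i ∈ S, Y i ⁻¹' sets i) := by
    have hall : ∀ᵐ ω ∂μ, ∀ i ∈ S, X i ω = Y i ω :=
      (ae_ball_iff S.countable_toSet).2 fun i _ => hXY i
    filter_upwards [hall] with ω hω
    show (ω ∈ ⋂ i ∈ S, X i ⁻¹' sets i) = (ω ∈ ⋂ i ∈ S, Y i ⁻¹' sets i)
    simp only [Set.mem_iInter, Set.mem_preimage, eq_iff_iff]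
    exact ⟨fun hm i hi => (hω i hi) ▸ hm i hi, fun hm i hi => (hω i hi).symm ▸ hm i hi⟩
  rw [← measure_congr hint, h S hsets]
  exact Finset.prod_congr rfl fun i hi => measure_congr (hpre i)

lemma integrable_sq_mul_exp {Ω : Type*} [MeasureSpace Ω]
    [IsProbabilityMeasure (ℙ : Measure Ω)] {Z : Ω → ℝ} (hZ : Measurable Z) {K : ℝ}
    (hK : 0 < K) (hint : Integrable (fun ω => Real.exp (|Z ω| / K)))
    {c : ℝ} (hc0 : 0 ≤ c) (hc : c ≤ 1 / (2 * K)) :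
    Integrable (fun ω => (Z ω) ^ 2 * Real.exp (c * |Z ω|)) := by
  refine Integrable.mono (hint.const_mul (16 * K ^ 2)) ?_ ?_
  · apply Measurable.aestronglyMeasurable
    fun_prop
  · refine Filter.Eventually.of_forall fun ω => ?_
    set v : ℝ := |Z ω| / (2 * K) with hv
    have hv0 : 0 ≤ v := div_nonneg (abs_nonneg _) (by positivity)
    have hZv : |Z ω| = 2 * K * v := by rw [hv]; field_simp
    have hsq : (Z ω) ^ 2 = 4 * K ^ 2 * v ^ 2 := by
      rw [← sq_abs, hZv]; ring
    have hc' : c * |Z ω| ≤ v := by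
      rw [hv]
      rcases eq_or_lt_of_le (abs_nonneg (Z ω)) with h0 | h0
      · rw [← h0]; simp
      · rw [div_eq_mul_inv, mul_comm (|Z ω|)]
        apply mul_le_mul_of_nonneg_right _ (abs_nonneg _)
        rwa [← one_div]
    have hvsq : v ^ 2 ≤ 4 * Real.exp v := by
      have h1 : 1 + v / 2 ≤ Real.exp (v / 2) := by
        have := Real.add_one_le_exp (v / 2); linarith
      have h2 : Real.exp (v / 2) * Real.exp (v / 2) = Real.exp v := by
        rw [← Real.exp_add]; ring_nf
      nlinarith [Real.exp_pos (v/2)]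
    have he2 : Real.exp v * Real.exp v = Real.exp (|Z ω| / K) := by
      rw [← Real.exp_add, hv]
      congr 1; field_simp; ring
    have hexpc : Real.exp (c * |Z ω|) ≤ Real.exp v := Real.exp_le_exp.2 hc'
    have hnorm1 : ‖(Z ω) ^ 2 * Real.exp (c * |Z ω|)‖ = (Z ω) ^ 2 * Real.exp (c * |Z ω|) :=
      Real.norm_of_nonneg (by positivity)
    have hnorm2 : ‖16 * K ^ 2 * Real.exp (|Z ω| / K)‖ = 16 * K ^ 2 * Real.exp (|Z ω| / K) :=
      Real.norm_of_nonneg (by positivity)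
    rw [hnorm1, hnorm2]
    calc (Z ω) ^ 2 * Real.exp (c * |Z ω|) ≤ (Z ω) ^ 2 * Real.exp v := by
          apply mul_le_mul_of_nonneg_left hexpc (by positivity)
      _ = 4 * K ^ 2 * v ^ 2 * Real.exp v := by rw [hsq]
      _ ≤ 4 * K ^ 2 * (4 * Real.exp v) * Real.exp v := by
          apply mul_le_mul_of_nonneg_right _ (Real.exp_pos v).le
          apply mul_le_mul_of_nonneg_left hvsq (by positivity)
      _ = 16 * K ^ 2 * Real.exp (|Z ω| / K) := by rw [← he2]; ring


lemma mgf_le_exp_half_sq {Ω : Type*} [MeasureSpace Ω]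
    [IsProbabilityMeasure (ℙ : Measure Ω)] {Z : Ω → ℝ}
    (hZint : Integrable Z) (hmeanZ : ∫ ω, Z ω = 0) {t M : ℝ} (ht : 0 ≤ t)
    (hexp : Integrable (fun ω => Real.exp (t * Z ω)))
    (hint2 : Integrable (fun ω => (Z ω) ^ 2 * Real.exp (t * |Z ω|)))
    (hM : ∫ ω, (Z ω) ^ 2 * Real.exp (t * |Z ω|) ≤ M) :
    mgf Z ℙ t ≤ Real.exp (t ^ 2 / 2 * M) := by
  have hpt : ∀ ω, Real.exp (t * Z ω) ≤
      1 + t * Z ω + t ^ 2 / 2 * ((Z ω) ^ 2 * Real.exp (t * |Z ω|)) := by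
    intro ω
    have h := exp_quadratic (t * Z ω)
    have habs : |t * Z ω| = t * |Z ω| := by rw [abs_mul, abs_of_nonneg ht]
    calc Real.exp (t * Z ω) ≤ 1 + t * Z ω + (t * Z ω) ^ 2 / 2 * Real.exp |t * Z ω| := h
      _ = 1 + t * Z ω + t ^ 2 / 2 * ((Z ω) ^ 2 * Real.exp (t * |Z ω|)) := by
          rw [habs]; ring
  have hrhs : Integrable (fun ω =>
      1 + t * Z ω + t ^ 2 / 2 * ((Z ω) ^ 2 * Real.exp (t * |Z ω|))) := by
    exact ((integrable_const 1).add (hZint.const_mul t)).add (hint2.const_mul _)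

  have hIle : mgf Z ℙ t ≤ ∫ ω, (1 + t * Z ω + t ^ 2 / 2 * ((Z ω) ^ 2 * Real.exp (t * |Z ω|))) := by
    exact integral_mono hexp hrhs hpt
  have hIeq : ∫ ω, (1 + t * Z ω + t ^ 2 / 2 * ((Z ω) ^ 2 * Real.exp (t * |Z ω|)))
      = 1 + t ^ 2 / 2 * ∫ ω, (Z ω) ^ 2 * Real.exp (t * |Z ω|) := by
    have hA : Integrable (fun ω => 1 + t * Z ω) ℙ := by
      exact (integrable_const 1).add (hZint.const_mul t)
    have hB : Integrable (fun ω => t ^ 2 / 2 * ((Z ω) ^ 2 * Real.exp (t * |Z ω|))) ℙ := by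
      exact hint2.const_mul _
    have hC : Integrable (fun ω => t * Z ω) ℙ := by exact hZint.const_mul t
    rw [integral_add hA hB, integral_add (integrable_const 1) hC,
      integral_const, integral_const_mul, integral_const_mul, hmeanZ]
    simp
  have h1 : mgf Z ℙ t ≤ 1 + t ^ 2 / 2 * M := by
    rw [hIeq] at hIle
    have : t ^ 2 / 2 * ∫ ω, (Z ω) ^ 2 * Real.exp (t * |Z ω|) ≤ t ^ 2 / 2 * M :=
      mul_le_mul_of_nonneg_left hM (by positivity)
    linarith
  calc mgf Z ℙ t ≤ 1 + t ^ 2 / 2 * M := h1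
    _ ≤ Real.exp (t ^ 2 / 2 * M) := by
        have := Real.add_one_le_exp (t ^ 2 / 2 * M); linarith

end AuxLemmas
/-- Corollary 1 (ε-δ form): for i.i.d. mean-zero sub-exponential `X₁, X₂, …` (not a.s.
zero), with `σ² = E X₁²`, for every `δ > 0` there is `η > 0` such that for all `n ≥ 1`
and all `0 ≤ x ≤ η n`, `P(Sₙ ≥ x) ≤ exp(−x²/((2+δ) n σ²))`. -/
theorem iid_subexponential_gaussian_tail {Ω : Type*} [MeasureSpace Ω]
    [IsProbabilityMeasure (ℙ : Measure Ω)]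
    (X : ℕ → Ω → ℝ)
    (hindep : iIndepFun X ℙ)
    (hident : ∀ i, IdentDistrib (X i) (X 0) ℙ ℙ)
    (hXint : Integrable (X 0)) (hmean : ∫ ω, X 0 ω = 0)
    (hne : ¬ (X 0 =ᵐ[(ℙ : Measure Ω)] 0))
    (hsub : ∃ K₀ : ℝ, 0 < K₀ ∧ Integrable (fun ω => Real.exp (|X 0 ω| / K₀)))
    (σ2 : ℝ) (hσ2 : σ2 = ∫ ω, (X 0 ω) ^ 2) :
    ∀ δ : ℝ, 0 < δ → ∃ η : ℝ, 0 < η ∧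
      ∀ n : ℕ, 0 < n → ∀ x : ℝ, 0 ≤ x → x ≤ η * n →
        (ℙ {ω | x ≤ ∑ i ∈ Finset.range n, X i ω}).toReal ≤
          Real.exp (-(x ^ 2 / ((2 + δ) * n * σ2))) := by
  obtain ⟨K₀, hK₀, hK₀int⟩ := hsub
  -- measurable modifications
  have hXaem : ∀ i, AEMeasurable (X i) ℙ := fun i => (hident i).aemeasurable_fst
  set Y : ℕ → Ω → ℝ := fun i => (hXaem i).mk (X i) with hYdef
  have hYmeas : ∀ i, Measurable (Y i) := fun i => (hXaem i).measurable_mk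
  have hXYae : ∀ i, X i =ᵐ[ℙ] Y i := fun i => (hXaem i).ae_eq_mk
  have hYindep := iIndepFun_of_ae_eq hindep hXYae
  set Z : Ω → ℝ := Y 0 with hZdef
  have hZmeas : Measurable Z := hYmeas 0
  have hZX : X 0 =ᵐ[ℙ] Z := hXYae 0
  have hZint : Integrable Z := hXint.congr hZX
  have hZmean : ∫ ω, Z ω = 0 := by rw [← integral_congr_ae hZX, hmean]
  have hZexpK : Integrable (fun ω => Real.exp (|Z ω| / K₀)) :=
    hK₀int.congr (by filter_upwards [hZX] with ω h; rw [h])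
  have hZsq : Integrable (fun ω => (Z ω) ^ 2) := by
    have h := integrable_sq_mul_exp hZmeas hK₀ hZexpK (le_refl (0:ℝ)) (by positivity)
    simpa using h
  have hσ2Z : σ2 = ∫ ω, (Z ω) ^ 2 := by
    rw [hσ2]
    exact integral_congr_ae (by filter_upwards [hZX] with ω h; rw [h])
  have hσ2pos : 0 < σ2 := by
    have hnn : 0 ≤ᵐ[(ℙ : Measure Ω)] fun ω => (X 0 ω) ^ 2 :=
      Filter.Eventually.of_forall fun ω => sq_nonneg _
    have hX2int : Integrable (fun ω => (X 0 ω) ^ 2) :=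
      hZsq.congr (by filter_upwards [hZX] with ω h; rw [h])
    rcases eq_or_lt_of_le (integral_nonneg fun ω => sq_nonneg (X 0 ω) :
        (0:ℝ) ≤ ∫ ω, (X 0 ω) ^ 2) with h | h
    · exfalso
      have h0 := (integral_eq_zero_iff_of_nonneg_ae hnn hX2int).1 h.symm
      apply hne
      filter_upwards [h0] with ω hω
      have : (X 0 ω) ^ 2 = 0 := hω
      simpa [pow_eq_zero_iff] using this
    · rw [hσ2]; exact h
  intro δ hδ
  -- choose t₀ via dominated convergence
  set tseq : ℕ → ℝ := fun n => 1 / (2 * K₀) * (1 / (n + 1)) with htseqdef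
  have htseq0 : ∀ n, 0 < tseq n := fun n => by positivity
  have htseqle : ∀ n, tseq n ≤ 1 / (2 * K₀) := by
    intro n
    have h1 : (1:ℝ) / (n + 1) ≤ 1 := by
      rw [div_le_one (by positivity)]
      simp
    calc 1 / (2 * K₀) * (1 / (n + 1)) ≤ 1 / (2 * K₀) * 1 :=
          mul_le_mul_of_nonneg_left h1 (by positivity)
      _ = 1 / (2 * K₀) := mul_one _
  set g : ℕ → Ω → ℝ := fun n ω => (Z ω) ^ 2 * Real.exp (tseq n * |Z ω|) with hgdef
  have hgint : ∀ n, Integrable (g n) :=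
    fun n => integrable_sq_mul_exp hZmeas hK₀ hZexpK (htseq0 n).le (htseqle n)
  have hboundint : Integrable (fun ω => (Z ω) ^ 2 * Real.exp (1 / (2 * K₀) * |Z ω|)) :=
    integrable_sq_mul_exp hZmeas hK₀ hZexpK (by positivity) le_rfl
  have hlim : Filter.Tendsto (fun n => ∫ ω, g n ω) Filter.atTop (nhds (∫ ω, (Z ω) ^ 2)) := by
    apply tendsto_integral_of_dominated_convergence
      (fun ω => (Z ω) ^ 2 * Real.exp (1 / (2 * K₀) * |Z ω|))
    · intro n
      exact (hgint n).aestronglyMeasurable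
    · exact hboundint
    · intro n
      refine Filter.Eventually.of_forall fun ω => ?_
      rw [Real.norm_of_nonneg (by positivity)]
      apply mul_le_mul_of_nonneg_left _ (sq_nonneg _)
      exact Real.exp_le_exp.2 (mul_le_mul_of_nonneg_right (htseqle n) (abs_nonneg _))
    · refine Filter.Eventually.of_forall fun ω => ?_
      have h0 : Filter.Tendsto tseq Filter.atTop (nhds 0) := by
        have h2 := tendsto_one_div_add_atTop_nhds_zero_nat.const_mul (1 / (2 * K₀))
        rw [mul_zero] at h2
        exact h2
      have h1 : Filter.Tendsto (fun n => tseq n * |Z ω|) Filter.atTop (nhds 0) := by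
        have h2 := h0.mul_const |Z ω|
        rw [zero_mul] at h2
        exact h2
      have h2 : Filter.Tendsto (fun n => Real.exp (tseq n * |Z ω|)) Filter.atTop (nhds 1) := by
        simpa [Function.comp_def] using (Real.continuous_exp.tendsto 0).comp h1
      have h3 := h2.const_mul ((Z ω) ^ 2)
      simpa using h3
  have hev : ∀ᶠ n in Filter.atTop, ∫ ω, g n ω < (1 + δ / 2) * σ2 := by
    apply hlim.eventually_lt_const
    rw [← hσ2Z]
    nlinarith
  obtain ⟨n₀, hn₀⟩ := hev.exists
  set t₀ : ℝ := tseq n₀ with ht₀def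
  set M : ℝ := ∫ ω, g n₀ ω with hMdef
  have hMσ : σ2 ≤ M := by
    rw [hσ2Z, hMdef]
    apply integral_mono hZsq (hgint n₀)
    intro ω
    have h1 : (1:ℝ) ≤ Real.exp (tseq n₀ * |Z ω|) :=
      Real.one_le_exp (by positivity)
    calc (Z ω) ^ 2 = (Z ω) ^ 2 * 1 := (mul_one _).symm
      _ ≤ (Z ω) ^ 2 * Real.exp (tseq n₀ * |Z ω|) :=
          mul_le_mul_of_nonneg_left h1 (sq_nonneg _)
  have hMle : M ≤ (1 + δ / 2) * σ2 := hn₀.le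
  have hMpos : 0 < M := lt_of_lt_of_le hσ2pos hMσ
  have ht₀pos : 0 < t₀ := htseq0 n₀
  refine ⟨t₀ * M, by positivity, ?_⟩
  intro n hn x hx hxle
  have hnpos : (0:ℝ) < n := Nat.cast_pos.2 hn
  set t : ℝ := x / (n * M) with htdef
  have ht0 : 0 ≤ t := div_nonneg hx (by positivity)
  have htle : t ≤ t₀ := by
    rw [htdef, div_le_iff₀ (by positivity)]
    calc x ≤ t₀ * M * n := hxle
      _ = t₀ * (n * M) := by ring
  have htK : t ≤ 1 / (2 * K₀) := htle.trans (htseqle n₀)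
  -- integrability of exp(t * Z)
  have hexpZ : Integrable (fun ω => Real.exp (t * Z ω)) := by
    refine Integrable.mono hZexpK ?_ ?_
    · exact (Real.measurable_exp.comp (hZmeas.const_mul t)).aestronglyMeasurable
    · refine Filter.Eventually.of_forall fun ω => ?_
      rw [Real.norm_of_nonneg (Real.exp_pos _).le, Real.norm_of_nonneg (Real.exp_pos _).le]
      apply Real.exp_le_exp.2
      calc t * Z ω ≤ t * |Z ω| := mul_le_mul_of_nonneg_left (le_abs_self _) ht0
        _ ≤ 1 / (2 * K₀) * |Z ω| := mul_le_mul_of_nonneg_right htK (abs_nonneg _)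
        _ ≤ 1 / K₀ * |Z ω| :=
            mul_le_mul_of_nonneg_right
              (one_div_le_one_div_of_le hK₀ (by linarith)) (abs_nonneg _)
        _ = |Z ω| / K₀ := by ring
  -- integrability of exp(t * Y i) for each i
  have hexpYi : ∀ i, Integrable (fun ω => Real.exp (t * Y i ω)) := by
    intro i
    have hID : IdentDistrib (fun ω => Real.exp (t * X i ω)) (fun ω => Real.exp (t * X 0 ω))
        ℙ ℙ := (hident i).comp (Real.measurable_exp.comp (measurable_id.const_mul t))
    have h0 : Integrable (fun ω => Real.exp (t * X 0 ω)) :=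
      hexpZ.congr (by filter_upwards [hZX] with ω h; rw [h])
    have hi : Integrable (fun ω => Real.exp (t * X i ω)) := hID.integrable_iff.2 h0
    exact hi.congr (by filter_upwards [hXYae i] with ω h; rw [h])
  -- mgf identities
  have hmgf_i : ∀ i, mgf (Y i) ℙ t = mgf Z ℙ t := by
    intro i
    have hID : IdentDistrib (fun ω => Real.exp (t * X i ω)) (fun ω => Real.exp (t * X 0 ω))
        ℙ ℙ := (hident i).comp (Real.measurable_exp.comp (measurable_id.const_mul t))
    have h1 : mgf (Y i) ℙ t = mgf (X i) ℙ t :=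
      (integral_congr_ae (by filter_upwards [hXYae i] with ω h; rw [h])).symm
    have h2 : mgf (X i) ℙ t = mgf (X 0) ℙ t := hID.integral_eq
    have h3 : mgf (X 0) ℙ t = mgf Z ℙ t :=
      integral_congr_ae (by filter_upwards [hZX] with ω h; rw [h])
    rw [h1, h2, h3]
  -- measure congruence for the sum
  have hmeasure_eq : ℙ {ω | x ≤ ∑ i ∈ Finset.range n, X i ω}
      = ℙ {ω | x ≤ (∑ i ∈ Finset.range n, Y i) ω} := by
    apply measure_congr
    have hall : ∀ᵐ ω ∂(ℙ : Measure Ω), ∀ i ∈ Finset.range n, X i ω = Y i ω :=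
      (ae_ball_iff (Finset.range n).countable_toSet).2 fun i _ => hXYae i
    filter_upwards [hall] with ω hω
    show (x ≤ ∑ i ∈ Finset.range n, X i ω) = (x ≤ (∑ i ∈ Finset.range n, Y i) ω)
    rw [Finset.sum_apply, Finset.sum_congr rfl hω]
  -- Chernoff bound
  have hchern := measure_ge_le_exp_mul_mgf (μ := (ℙ : Measure Ω))
    (X := ∑ i ∈ Finset.range n, Y i) x ht0
    (hYindep.integrable_exp_mul_sum hYmeas fun i _ => hexpYi i)
  rw [hYindep.mgf_sum hYmeas] at hchern
  have hprod : ∏ i ∈ Finset.range n, mgf (Y i) ℙ t = (mgf Z ℙ t) ^ n := by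
    rw [Finset.prod_congr rfl fun i _ => hmgf_i i, Finset.prod_const, Finset.card_range]
  rw [hprod] at hchern
  -- mgf bound
  have hint2t : Integrable (fun ω => (Z ω) ^ 2 * Real.exp (t * |Z ω|)) :=
    integrable_sq_mul_exp hZmeas hK₀ hZexpK ht0 htK
  have hMt : ∫ ω, (Z ω) ^ 2 * Real.exp (t * |Z ω|) ≤ M := by
    rw [hMdef]
    apply integral_mono hint2t (hgint n₀)
    intro ω
    apply mul_le_mul_of_nonneg_left _ (sq_nonneg _)
    exact Real.exp_le_exp.2 (mul_le_mul_of_nonneg_right htle (abs_nonneg _))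
  have hmgfZ : mgf Z ℙ t ≤ Real.exp (t ^ 2 / 2 * M) :=
    mgf_le_exp_half_sq hZint hZmean ht0 hexpZ hint2t hMt
  -- combine
  calc (ℙ {ω | x ≤ ∑ i ∈ Finset.range n, X i ω}).toReal
      = (ℙ {ω | x ≤ (∑ i ∈ Finset.range n, Y i) ω}).toReal := by rw [hmeasure_eq]
    _ ≤ Real.exp (-t * x) * (mgf Z ℙ t) ^ n := hchern
    _ ≤ Real.exp (-t * x) * (Real.exp (t ^ 2 / 2 * M)) ^ n := by
        apply mul_le_mul_of_nonneg_left _ (Real.exp_pos _).le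
        exact pow_le_pow_left₀ (mgf_nonneg) hmgfZ n
    _ = Real.exp (-t * x + n * (t ^ 2 / 2 * M)) := by
        rw [← Real.exp_nat_mul, ← Real.exp_add]
    _ = Real.exp (-(x ^ 2 / (2 * n * M))) := by
        congr 1
        rw [htdef]
        field_simp
        ring
    _ ≤ Real.exp (-(x ^ 2 / ((2 + δ) * n * σ2))) := by
        apply Real.exp_le_exp.2
        rw [neg_le_neg_iff]
        apply div_le_div_of_nonneg_left (sq_nonneg x) ?_ ?_
        · positivity
        · have h2M : 2 * M ≤ (2 + δ) * σ2 := by nlinarith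
          calc (2 + δ) * (n:ℝ) * σ2 = (n:ℝ) * ((2 + δ) * σ2) := by ring
            _ ≥ (n:ℝ) * (2 * M) := by
                apply mul_le_mul_of_nonneg_left h2M hnpos.le
            _ = 2 * n * M := by ring
end
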